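/- For every g = (g₁,g₂) ∈ 𝒢, the matrix υ(g) • ρ(g) is similar to ρ(g) or to ρ(g)⁻¹. Moreover, there is no invertible complex 4×4 matrix u such that u·ρ(g)·u⁻¹ = υ(g) • ρ(g) for all g ∈ 𝒢, and there is no invertible complex 4×4 matrix u such that u·conj(ρ(g))·u⁻¹ = υ(g) • ρ(g) for all g ∈ 𝒢. (That is, ρ and the twist υ·ρ are element conjugate but not conjugate in a Spin(1,6)-subgroup N of Spin(7) containing SU(4) with index 2.) -/

import Mathlib

open Matrix

noncomputable section

/-- Membership in `O(2)^±`: a unitary `2×2` complex matrix `g` with `g·gᵀ = ±1`. -/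
def IsOpm (g : Matrix (Fin 2) (Fin 2) ℂ) : Prop :=
  g ∈ Matrix.unitaryGroup (Fin 2) ℂ ∧ (g * gᵀ = 1 ∨ g * gᵀ = -1)

open Classical in
/-- The similitude factor `μ(g) ∈ {±1}` of `g ∈ O(2)^±`, defined by `g·gᵀ = μ(g)·1`. -/
noncomputable def mu (g : Matrix (Fin 2) (Fin 2) ℂ) : ℂ :=
  if g * gᵀ = 1 then 1 else -1

/-- `ε(g) = μ(g)·det(g)` for `g ∈ O(2)^±`. -/
noncomputable def eps (g : Matrix (Fin 2) (Fin 2) ℂ) : ℂ :=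
  mu g * g.det

/-- Membership in the group `𝒢 ⊆ O(2)^± × O(2)^±`: `det g₁ = det g₂` and `μ(g₂) = ε(g₁)`. -/
def memG (g : Matrix (Fin 2) (Fin 2) ℂ × Matrix (Fin 2) (Fin 2) ℂ) : Prop :=
  IsOpm g.1 ∧ IsOpm g.2 ∧ g.1.det = g.2.det ∧ mu g.2 = eps g.1

/-- The block-diagonal embedding `ρ(g₁,g₂) = diag(g₁,g₂)` into `4×4` matrices. -/
noncomputable def rhoG (g : Matrix (Fin 2) (Fin 2) ℂ × Matrix (Fin 2) (Fin 2) ℂ) :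
    Matrix (Fin 4) (Fin 4) ℂ :=
  Matrix.reindex finSumFinEquiv finSumFinEquiv (Matrix.fromBlocks g.1 0 0 g.2)

/-- Similarity of complex `4×4` matrices. -/
def MatSimilar (x y : Matrix (Fin 4) (Fin 4) ℂ) : Prop :=
  ∃ u : (Matrix (Fin 4) (Fin 4) ℂ)ˣ,
    (u : Matrix (Fin 4) (Fin 4) ℂ) * x * ((u⁻¹ : (Matrix (Fin 4) (Fin 4) ℂ)ˣ) : _) = y

/-! ### Auxiliary material -/

private def Jm : Matrix (Fin 2) (Fin 2) ℂ := !![0, -1; 1, 0]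
private def Rm : Matrix (Fin 2) (Fin 2) ℂ := !![1, 0; 0, -1]

private lemma JJ : Jm * Jm = -1 := by
  rw [Jm, Matrix.mul_fin_two]
  ext i j; fin_cases i <;> fin_cases j <;> simp

private lemma RR : Rm * Rm = 1 := by
  rw [Rm, Matrix.mul_fin_two]
  ext i j; fin_cases i <;> fin_cases j <;> simp [Matrix.one_apply]

private lemma mu_pos' {g : Matrix (Fin 2) (Fin 2) ℂ} (h : g * gᵀ = 1) : mu g = 1 := by
  unfold mu; rw [if_pos h]

private lemma one_ne_negone : (1 : Matrix (Fin 2) (Fin 2) ℂ) ≠ -1 := by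
  intro hh
  have := congrFun (congrFun hh 0) 0
  simp [Matrix.one_apply, Matrix.neg_apply] at this
  norm_num at this

private lemma mu_neg' {g : Matrix (Fin 2) (Fin 2) ℂ} (h : g * gᵀ = -1) : mu g = -1 := by
  unfold mu
  rw [if_neg]
  intro h'
  exact one_ne_negone (h'.symm.trans h)

/-- shape lemma: `g·gᵀ = 1`, `det g = -1` gives `g·J·g = -J`. -/
private lemma key1 (g : Matrix (Fin 2) (Fin 2) ℂ) (h : g * gᵀ = 1) (hd : g.det = -1) :
    g * Jm * g = -Jm := by
  have h00 : g 0 0 * g 0 0 + g 0 1 * g 0 1 = 1 := by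
    simpa [Matrix.mul_apply, Fin.sum_univ_two, Matrix.one_apply] using congrFun (congrFun h 0) 0
  have h01 : g 0 0 * g 1 0 + g 0 1 * g 1 1 = 0 := by
    simpa [Matrix.mul_apply, Fin.sum_univ_two, Matrix.one_apply] using congrFun (congrFun h 0) 1
  rw [Matrix.det_fin_two] at hd
  have e1 : g 1 1 = -g 0 0 := by
    linear_combination (-(g 1 1)) * h00 + g 0 0 * hd + g 0 1 * h01
  have e2 : g 1 0 = g 0 1 := by
    linear_combination (-(g 1 0)) * h00 + g 0 0 * h01 + (-(g 0 1)) * hd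
  ext i j
  fin_cases i <;> fin_cases j <;>
    simp [Jm, Matrix.mul_apply, Fin.sum_univ_two, e1, e2] <;>
    first
      | linear_combination h00
      | linear_combination -h00
      | linear_combination 2 * h00
      | linear_combination -2 * h00
      | ring

/-- shape lemma: `g·gᵀ = -1`, `det g = -1` gives `g·R·g = -R`. -/
private lemma key2 (g : Matrix (Fin 2) (Fin 2) ℂ) (h : g * gᵀ = -1) (hd : g.det = -1) :
    g * Rm * g = -Rm := by
  have h00 : g 0 0 * g 0 0 + g 0 1 * g 0 1 = -1 := by
    simpa [Matrix.mul_apply, Fin.sum_univ_two, Matrix.one_apply] using congrFun (congrFun h 0) 0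
  have h01 : g 0 0 * g 1 0 + g 0 1 * g 1 1 = 0 := by
    simpa [Matrix.mul_apply, Fin.sum_univ_two, Matrix.one_apply] using congrFun (congrFun h 0) 1
  rw [Matrix.det_fin_two] at hd
  have e1 : g 1 1 = g 0 0 := by
    linear_combination g 1 1 * h00 + (-(g 0 0)) * hd + (-(g 0 1)) * h01
  have e2 : g 1 0 = -g 0 1 := by
    linear_combination g 1 0 * h00 + (-(g 0 0)) * h01 + g 0 1 * hd
  ext i j
  fin_cases i <;> fin_cases j <;>
    simp [Rm, Matrix.mul_apply, Fin.sum_univ_two, e1, e2] <;>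
    first
      | linear_combination h00
      | linear_combination -h00
      | linear_combination 2 * h00
      | linear_combination -2 * h00
      | ring

/-- shape lemma: `g·gᵀ = -1`, `det g = 1` gives `g² = -1`. -/
private lemma key3 (g : Matrix (Fin 2) (Fin 2) ℂ) (h : g * gᵀ = -1) (hd : g.det = 1) :
    g * g = -1 := by
  have h00 : g 0 0 * g 0 0 + g 0 1 * g 0 1 = -1 := by
    simpa [Matrix.mul_apply, Fin.sum_univ_two, Matrix.one_apply] using congrFun (congrFun h 0) 0
  have h01 : g 0 0 * g 1 0 + g 0 1 * g 1 1 = 0 := by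
    simpa [Matrix.mul_apply, Fin.sum_univ_two, Matrix.one_apply] using congrFun (congrFun h 0) 1
  rw [Matrix.det_fin_two] at hd
  have e1 : g 1 1 = -g 0 0 := by
    linear_combination g 1 1 * h00 + (-(g 0 1)) * h01 + (-(g 0 0)) * hd
  have e2 : g 1 0 = g 0 1 := by
    linear_combination g 1 0 * h00 + (-(g 0 0)) * h01 + g 0 1 * hd
  ext i j
  fin_cases i <;> fin_cases j <;>
    simp [Matrix.mul_apply, Fin.sum_univ_two, Matrix.one_apply, e1, e2] <;>
    first
      | linear_combination h00
      | linear_combination -h00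
      | linear_combination 2 * h00
      | linear_combination -2 * h00
      | ring

private def iota : Matrix (Fin 2 ⊕ Fin 2) (Fin 2 ⊕ Fin 2) ℂ ≃ₐ[ℂ] Matrix (Fin 4) (Fin 4) ℂ :=
  Matrix.reindexAlgEquiv ℂ ℂ finSumFinEquiv

private lemma rhoG_eq (g : Matrix (Fin 2) (Fin 2) ℂ × Matrix (Fin 2) (Fin 2) ℂ) :
    rhoG g = iota (Matrix.fromBlocks g.1 0 0 g.2) := by
  rw [rhoG, iota, Matrix.reindexAlgEquiv_apply]

private lemma trace_iota (M : Matrix (Fin 2 ⊕ Fin 2) (Fin 2 ⊕ Fin 2) ℂ) :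
    (iota M).trace = M.trace := by
  rw [iota, Matrix.reindexAlgEquiv_apply, Matrix.reindex_apply]
  unfold Matrix.trace
  simp only [Matrix.diag, Matrix.submatrix_apply]
  exact Fintype.sum_equiv finSumFinEquiv.symm
    (fun i => M (finSumFinEquiv.symm i) (finSumFinEquiv.symm i)) (fun j => M j j) (fun i => rfl)

private lemma trace_fromBlocks' (A B C D : Matrix (Fin 2) (Fin 2) ℂ) :
    (Matrix.fromBlocks A B C D).trace = A.trace + D.trace := by
  unfold Matrix.trace
  rw [Fintype.sum_sum_type]
  simp [Matrix.diag]

private lemma trace_rhoG (g : Matrix (Fin 2) (Fin 2) ℂ × Matrix (Fin 2) (Fin 2) ℂ) :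
    (rhoG g).trace = g.1.trace + g.2.trace := by
  rw [rhoG_eq, trace_iota, trace_fromBlocks']

private lemma trace_map4 (A : Matrix (Fin 4) (Fin 4) ℂ) :
    (A.map (starRingEnd ℂ)).trace = starRingEnd ℂ A.trace := by
  rw [Matrix.trace, Matrix.trace, map_sum]
  simp [Matrix.diag, Matrix.map_apply]

private def Dm : Matrix (Fin 2) (Fin 2) ℂ := !![1, 0; 0, -1]
private def Em : Matrix (Fin 2) (Fin 2) ℂ := !![Complex.I, 0; 0, Complex.I]

private lemma Dm_transpose : Dmᵀ = Dm := by
  ext i j; fin_cases i <;> fin_cases j <;> rfl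

private lemma Em_transpose : Emᵀ = Em := by
  ext i j; fin_cases i <;> fin_cases j <;> rfl

private lemma star_Dm : star Dm = Dm := by
  ext i j; fin_cases i <;> fin_cases j <;> simp [Dm, Matrix.star_apply]

private lemma star_Em : star Em = -Em := by
  ext i j; fin_cases i <;> fin_cases j <;>
    simp [Em, Matrix.star_apply, Matrix.neg_apply, Complex.star_def]

private lemma DmDm : Dm * Dm = 1 := by
  ext i j
  fin_cases i <;> fin_cases j <;>
    simp [Dm, Matrix.mul_apply, Fin.sum_univ_two, Matrix.one_apply]

private lemma EmEm : Em * Em = -1 := by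
  ext i j
  fin_cases i <;> fin_cases j <;>
    simp [Em, Matrix.mul_apply, Fin.sum_univ_two, Matrix.one_apply, Matrix.neg_apply,
      Complex.I_mul_I]

private lemma Dm_mul_transpose : Dm * Dmᵀ = 1 := by
  rw [Dm_transpose]; exact DmDm

private lemma Em_mul_transpose : Em * Emᵀ = -1 := by
  rw [Em_transpose]; exact EmEm

private lemma Dm_opm : IsOpm Dm := by
  refine ⟨?_, Or.inl Dm_mul_transpose⟩
  rw [Matrix.mem_unitaryGroup_iff, star_Dm]
  exact DmDm

private lemma Em_opm : IsOpm Em := by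
  refine ⟨?_, Or.inr Em_mul_transpose⟩
  rw [Matrix.mem_unitaryGroup_iff, star_Em, Matrix.mul_neg, EmEm, neg_neg]

private lemma det_Dm : Dm.det = -1 := by
  rw [Dm, Matrix.det_fin_two_of]; ring

private lemma det_Em : Em.det = -1 := by
  rw [Em, Matrix.det_fin_two_of]
  simp [Complex.I_mul_I]

private lemma memG_DE : memG (Dm, Em) := by
  refine ⟨Dm_opm, Em_opm, ?_, ?_⟩
  · rw [det_Dm, det_Em]
  · rw [mu_neg' Em_mul_transpose, eps, mu_pos' Dm_mul_transpose, det_Dm]; ring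

private lemma memG_ED : memG (Em, Dm) := by
  refine ⟨Em_opm, Dm_opm, ?_, ?_⟩
  · rw [det_Dm, det_Em]
  · rw [mu_pos' Dm_mul_transpose, eps, mu_neg' Em_mul_transpose, det_Em]; ring

private lemma trace_Dm : Dm.trace = 0 := by
  rw [Dm, Matrix.trace_fin_two_of]; ring

private lemma trace_Em : Em.trace = 2 * Complex.I := by
  rw [Em, Matrix.trace_fin_two_of]; ring

/-- The twist of `ρ` by the character `υ` is element conjugate to `ρ` (in the
`Spin(1,6)`-subgroup `N`), but not conjugate to `ρ` in `N`: neither to `ρ` nor to its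
complex conjugate. -/
theorem example2_element_conjugate_not_conjugate :
    (∀ g, memG g →
      (MatSimilar (mu g.2 • rhoG g) (rhoG g) ∨ MatSimilar (mu g.2 • rhoG g) (rhoG g)⁻¹)) ∧
    (¬ ∃ u : (Matrix (Fin 4) (Fin 4) ℂ)ˣ, ∀ g, memG g →
      (u : Matrix (Fin 4) (Fin 4) ℂ) * rhoG g * ((u⁻¹ : (Matrix (Fin 4) (Fin 4) ℂ)ˣ) : _) =
        mu g.2 • rhoG g) ∧
    (¬ ∃ u : (Matrix (Fin 4) (Fin 4) ℂ)ˣ, ∀ g, memG g →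
      (u : Matrix (Fin 4) (Fin 4) ℂ) * (rhoG g).map (starRingEnd ℂ) *
          ((u⁻¹ : (Matrix (Fin 4) (Fin 4) ℂ)ˣ) : _) =
        mu g.2 • rhoG g) := by
  refine ⟨?_, ?_, ?_⟩
  · -- element-conjugacy
    rintro ⟨g₁, g₂⟩ ⟨⟨hu1, ho1⟩, ⟨hu2, ho2⟩, hdet, hmu⟩
    dsimp only at hu1 hu2 hdet hmu ho1 ho2 ⊢
    rcases ho2 with ho2 | ho2
    · -- μ(g₂) = 1 : the twist is trivial
      left
      rw [mu_pos' ho2, one_smul]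
      exact ⟨1, by simp⟩
    · -- μ(g₂) = -1
      have hmu2 : mu g₂ = -1 := mu_neg' ho2
      rw [eps] at hmu
      rcases ho1 with ho1 | ho1
      · -- μ(g₁) = 1, det g₁ = det g₂ = -1
        have hd1 : det g₁ = -1 := by
          rw [mu_pos' ho1, one_mul] at hmu
          rw [← hmu]; exact hmu2
        have hd2 : det g₂ = -1 := by rw [← hdet]; exact hd1
        have hb1 : g₁ * Jm * g₁ = -Jm := key1 g₁ ho1 hd1
        have hb2 : g₂ * Rm * g₂ = -Rm := key2 g₂ ho2 hd2
        right
        -- the conjugating matrix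
        set M : Matrix (Fin 2 ⊕ Fin 2) (Fin 2 ⊕ Fin 2) ℂ := Matrix.fromBlocks g₁ 0 0 g₂ with hM
        set B : Matrix (Fin 2 ⊕ Fin 2) (Fin 2 ⊕ Fin 2) ℂ := Matrix.fromBlocks Jm 0 0 Rm with hB
        set B' : Matrix (Fin 2 ⊕ Fin 2) (Fin 2 ⊕ Fin 2) ℂ := Matrix.fromBlocks (-Jm) 0 0 Rm with hB'
        have hBB' : B * B' = 1 := by
          rw [hB, hB', Matrix.fromBlocks_multiply]
          have : Jm * -Jm = 1 := by rw [mul_neg, JJ, neg_neg]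
          simp [this, RR]
        have hB'B : B' * B = 1 := by
          rw [hB, hB', Matrix.fromBlocks_multiply]
          have : -Jm * Jm = 1 := by rw [neg_mul, JJ, neg_neg]
          simp [this, RR]
        have hVV : iota B * iota B' = 1 := by
          rw [← _root_.map_mul, hBB', _root_.map_one]
        have hV'V : iota B' * iota B = 1 := by
          rw [← _root_.map_mul, hB'B, _root_.map_one]
        refine ⟨⟨iota B, iota B', hVV, hV'V⟩, ?_⟩
        show iota B * (mu g₂ • rhoG (g₁, g₂)) * iota B' = (rhoG (g₁, g₂))⁻¹
        rw [hmu2, neg_one_smul]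
        symm
        apply Matrix.inv_eq_right_inv
        have hρ : rhoG (g₁, g₂) = iota M := by rw [rhoG_eq]
        have hMneg : -M = Matrix.fromBlocks (-g₁) 0 0 (-g₂) := by
          rw [hM, Matrix.fromBlocks_neg, neg_zero]
        have hcalc : M * (B * -M * B') = 1 := by
          have s1 : B * -M = Matrix.fromBlocks (-(Jm * g₁)) 0 0 (-(Rm * g₂)) := by
            rw [hMneg, hB, Matrix.fromBlocks_multiply]
            simp [Matrix.mul_neg]
          have s3 : B * -M * B' = Matrix.fromBlocks (Jm * g₁ * Jm) 0 0 (-(Rm * g₂ * Rm)) := by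
            rw [s1, hB', Matrix.fromBlocks_multiply]
            simp [Matrix.neg_mul, Matrix.mul_neg]
          rw [s3, hM, Matrix.fromBlocks_multiply]
          have c1 : g₁ * (Jm * g₁ * Jm) = 1 := by
            rw [← Matrix.mul_assoc, ← Matrix.mul_assoc, hb1, Matrix.neg_mul, JJ, neg_neg]
          have c2 : g₂ * -(Rm * g₂ * Rm) = 1 := by
            rw [Matrix.mul_neg, ← Matrix.mul_assoc, ← Matrix.mul_assoc, hb2,
              Matrix.neg_mul, neg_neg, RR]
          simp [c1, c2]
        rw [hρ]
        simp only [← _root_.map_neg, ← _root_.map_mul]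
        rw [hcalc, _root_.map_one]
      · -- μ(g₁) = -1, det g₁ = det g₂ = 1
        have hd1 : det g₁ = 1 := by
          rw [mu_neg' ho1, hmu2] at hmu
          linear_combination hmu
        have hd2 : det g₂ = 1 := by rw [← hdet]; exact hd1
        have hb1 : g₁ * g₁ = -1 := key3 g₁ ho1 hd1
        have hb2 : g₂ * g₂ = -1 := key3 g₂ ho2 hd2
        right
        refine ⟨1, ?_⟩
        simp only [Units.val_one, one_mul, inv_one, mul_one]
        rw [hmu2, neg_one_smul]
        symm
        apply Matrix.inv_eq_right_inv
        have hρ : rhoG (g₁, g₂) = iota (Matrix.fromBlocks g₁ 0 0 g₂) := by rw [rhoG_eq]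
        rw [hρ, Matrix.mul_neg, ← _root_.map_mul, Matrix.fromBlocks_multiply]
        simp only [Matrix.mul_zero, Matrix.zero_mul, add_zero, zero_add, hb1, hb2]
        have hfb : Matrix.fromBlocks (-1 : Matrix (Fin 2) (Fin 2) ℂ) 0 0 (-1 : Matrix (Fin 2) (Fin 2) ℂ) = -1 := by
          have h1 := Matrix.fromBlocks_neg (1 : Matrix (Fin 2) (Fin 2) ℂ)
            (0 : Matrix (Fin 2) (Fin 2) ℂ) (0 : Matrix (Fin 2) (Fin 2) ℂ)
            (1 : Matrix (Fin 2) (Fin 2) ℂ)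
          rw [neg_zero] at h1
          rw [← h1, Matrix.fromBlocks_one]
        rw [hfb, _root_.map_neg, _root_.map_one, neg_neg]
  · -- not conjugate to ρ
    rintro ⟨u, hu⟩
    have h := hu (Dm, Em) memG_DE
    have ht := congrArg Matrix.trace h
    rw [Matrix.trace_units_conj, Matrix.trace_smul, trace_rhoG] at ht
    dsimp only at ht
    rw [mu_neg' Em_mul_transpose, trace_Dm, trace_Em, zero_add, smul_eq_mul] at ht
    have h4 : (4 : ℂ) * Complex.I = 0 := by linear_combination ht
    norm_num [Complex.I_ne_zero] at h4
  · -- not conjugate to conj ∘ ρ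
    rintro ⟨u, hu⟩
    have h := hu (Em, Dm) memG_ED
    have ht := congrArg Matrix.trace h
    rw [Matrix.trace_units_conj, Matrix.trace_smul, trace_map4, trace_rhoG] at ht
    dsimp only at ht
    rw [mu_pos' Dm_mul_transpose, one_smul, trace_Dm, trace_Em, add_zero] at ht
    have hc : (starRingEnd ℂ) (2 * Complex.I) = -(2 * Complex.I) := by
      rw [_root_.map_mul, Complex.conj_I, Complex.conj_ofNat]; ring
    rw [hc] at ht
    have h4 : (4 : ℂ) * Complex.I = 0 := by linear_combination -ht
    norm_num [Complex.I_ne_zero] at h4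

end
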